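/- In any controlled hidden Markov model with output-feedback policy over horizon T ≥ 1, the following exchange identity holds: H(X_T | Y^{T-1}, U^{T-1}) − H(X_T | X^{T-1}, Y^{T-1}, U^{T-1}) = H(X^{T-1} | Y^{T-1}, U^{T-1}) − H(X^{T-1} | X_T, Y^T, U^{T-1}). -/

import Mathlib

open Finset

/-- Trajectory space of a controlled HMM over horizon `T`:
states `x_0,…,x_T`, measurements `y_0,…,y_T`, controls `u_0,…,u_{T-1}`. -/
abbrev Traj (T : ℕ) (X Y U : Type*) : Type _ :=
  (Fin (T + 1) → X) × (Fin (T + 1) → Y) × (Fin T → U)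

/-- A controlled hidden Markov model with output-feedback policy over horizon `T`,
with finite state space `X`, measurement space `Y` and control space `U`.
`f t x' x u = f_t(x' | x, u)`, `g0 y x = g₀(y | x)`, `g t y x u = g_{t+1}(y | x, u_t)`,
and `pol t a ys us = μ_t(a | y^t, u^{t-1})` (causality is imposed by `pol_causal`). -/
structure CHMM (T : ℕ) (X Y U : Type*) [Fintype X] [Fintype Y] [Fintype U] where
  p0 : X → ℝ
  f : Fin T → X → X → U → ℝ
  g0 : Y → X → ℝ
  g : Fin T → Y → X → U → ℝ
  pol : Fin T → U → (Fin (T + 1) → Y) → (Fin T → U) → ℝ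
  p0_nonneg : ∀ x, 0 ≤ p0 x
  p0_sum : ∑ x, p0 x = 1
  f_nonneg : ∀ t x' x u, 0 ≤ f t x' x u
  f_sum : ∀ t x u, ∑ x', f t x' x u = 1
  g0_nonneg : ∀ y x, 0 ≤ g0 y x
  g0_sum : ∀ x, ∑ y, g0 y x = 1
  g_nonneg : ∀ t y x u, 0 ≤ g t y x u
  g_sum : ∀ t x u, ∑ y, g t y x u = 1
  pol_nonneg : ∀ t a ys us, 0 ≤ pol t a ys us
  pol_sum : ∀ t ys us, ∑ a, pol t a ys us = 1
  pol_causal : ∀ (t : Fin T) (a : U) (ys ys' : Fin (T + 1) → Y) (us us' : Fin T → U),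
    (∀ i : Fin (T + 1), (i : ℕ) ≤ (t : ℕ) → ys i = ys' i) →
    (∀ i : Fin T, (i : ℕ) < (t : ℕ) → us i = us' i) →
    pol t a ys us = pol t a ys' us'

variable {T : ℕ} {X Y U : Type*} [Fintype X] [Fintype Y] [Fintype U]
  [DecidableEq X] [DecidableEq Y] [DecidableEq U]

/-- The joint probability mass function on trajectories induced by a controlled HMM. -/
noncomputable def CHMM.p (M : CHMM T X Y U) (ω : Traj T X Y U) : ℝ :=
  M.p0 (ω.1 0) * M.g0 (ω.2.1 0) (ω.1 0) *
    ∏ t : Fin T,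
      (M.pol t (ω.2.2 t) ω.2.1 ω.2.2 *
        M.f t (ω.1 t.succ) (ω.1 t.castSucc) (ω.2.2 t) *
        M.g t (ω.2.1 t.succ) (ω.1 t.succ) (ω.2.2 t))

/-- `M.prob A a = P(A = a)` for a random variable `A` on trajectory space. -/
noncomputable def CHMM.prob (M : CHMM T X Y U) {α : Type*} [DecidableEq α]
    (A : Traj T X Y U → α) (a : α) : ℝ :=
  ∑ ω : Traj T X Y U, if A ω = a then M.p ω else 0

/-- `M.cprob A a B b = P(A = a | B = b) = P(A = a, B = b) / P(B = b)`. -/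
noncomputable def CHMM.cprob (M : CHMM T X Y U) {α β : Type*} [DecidableEq α] [DecidableEq β]
    (A : Traj T X Y U → α) (a : α) (B : Traj T X Y U → β) (b : β) : ℝ :=
  M.prob (fun ω => (A ω, B ω)) (a, b) / M.prob B b

/-- Shannon entropy `H(A)` of a random variable `A` (with `0 log 0 = 0`, as `Real.log 0 = 0`). -/
noncomputable def CHMM.entropy (M : CHMM T X Y U) {α : Type*} [Fintype α] [DecidableEq α]
    (A : Traj T X Y U → α) : ℝ :=
  -∑ a : α, M.prob A a * Real.log (M.prob A a)

/-- Conditional entropy `H(A | B) = -∑_{a,b} P(A=a,B=b) log P(A=a|B=b)`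
(terms with `P(A=a,B=b) = 0`, in particular those with `P(B=b) = 0`, vanish). -/
noncomputable def CHMM.condEnt (M : CHMM T X Y U) {α β : Type*}
    [Fintype α] [DecidableEq α] [Fintype β] [DecidableEq β]
    (A : Traj T X Y U → α) (B : Traj T X Y U → β) : ℝ :=
  -∑ a : α, ∑ b : β,
      M.prob (fun ω => (A ω, B ω)) (a, b) *
        Real.log (M.prob (fun ω => (A ω, B ω)) (a, b) / M.prob B b)

/-- Conditional mutual information `I(A ; B | C) = H(A | C) - H(A | B, C)`. -/
noncomputable def CHMM.condMI (M : CHMM T X Y U) {α β γ : Type*}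
    [Fintype α] [DecidableEq α] [Fintype β] [DecidableEq β] [Fintype γ] [DecidableEq γ]
    (A : Traj T X Y U → α) (B : Traj T X Y U → β) (C : Traj T X Y U → γ) : ℝ :=
  M.condEnt A C - M.condEnt A (fun ω => (B ω, C ω))

/-- Point-wise conditional entropy `h(A | b) = -∑_a P(A=a|B=b) log P(A=a|B=b)`. -/
noncomputable def CHMM.pcondEnt (M : CHMM T X Y U) {α β : Type*}
    [Fintype α] [DecidableEq α] [DecidableEq β]
    (A : Traj T X Y U → α) (B : Traj T X Y U → β) (b : β) : ℝ :=
  -∑ a : α, M.cprob A a B b * Real.log (M.cprob A a B b)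

/-- Point-wise conditional entropy of `A` given the random variable `A'` and the
realization `B = b`:  `h(A | A', b) = -∑_{a,a'} P(A=a,A'=a'|B=b) log P(A=a|A'=a',B=b)`. -/
noncomputable def CHMM.pcondEnt2 (M : CHMM T X Y U) {α α' β : Type*}
    [Fintype α] [DecidableEq α] [Fintype α'] [DecidableEq α'] [DecidableEq β]
    (A : Traj T X Y U → α) (A' : Traj T X Y U → α') (B : Traj T X Y U → β) (b : β) : ℝ :=
  -∑ a : α, ∑ a' : α',
      M.cprob (fun ω => (A ω, A' ω)) (a, a') B b *
        Real.log (M.prob (fun ω => (A ω, (A' ω, B ω))) (a, (a', b)) /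
          M.prob (fun ω => (A' ω, B ω)) (a', b))

/-- The state history `X^{n-1} = (X_0, …, X_{n-1})` as a random variable. -/
def Xpref (T : ℕ) {X Y U : Type*} (n : ℕ) (h : n ≤ T + 1) :
    Traj T X Y U → (Fin n → X) :=
  fun ω i => ω.1 (Fin.castLE h i)

/-- The measurement history `Y^{n-1} = (Y_0, …, Y_{n-1})` as a random variable. -/
def Ypref (T : ℕ) {X Y U : Type*} (n : ℕ) (h : n ≤ T + 1) :
    Traj T X Y U → (Fin n → Y) :=
  fun ω i => ω.2.1 (Fin.castLE h i)

/-- The control history `U^{n-1} = (U_0, …, U_{n-1})` as a random variable. -/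
def Upref (T : ℕ) {X Y U : Type*} (n : ℕ) (h : n ≤ T) :
    Traj T X Y U → (Fin n → U) :=
  fun ω i => ω.2.2 (Fin.castLE h i)

/-- The state `X_t` as a random variable. -/
def Xat (T : ℕ) {X Y U : Type*} (t : ℕ) (h : t < T + 1) : Traj T X Y U → X :=
  fun ω => ω.1 ⟨t, h⟩

/-- The measurement `Y_t` as a random variable. -/
def Yat (T : ℕ) {X Y U : Type*} (t : ℕ) (h : t < T + 1) : Traj T X Y U → Y :=
  fun ω => ω.2.1 ⟨t, h⟩

/-- The control `U_t` as a random variable. -/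
def Uat (T : ℕ) {X Y U : Type*} (t : ℕ) (h : t < T) : Traj T X Y U → U :=
  fun ω => ω.2.2 ⟨t, h⟩

set_option linter.unusedSectionVars false
set_option maxHeartbeats 1000000

namespace CHMMAux

variable {T : ℕ} {X Y U : Type*} [Fintype X] [Fintype Y] [Fintype U]
  [DecidableEq X] [DecidableEq Y] [DecidableEq U] (M : CHMM T X Y U)

lemma p_nonneg (ω : Traj T X Y U) : 0 ≤ M.p ω := by
  unfold CHMM.p
  refine mul_nonneg (mul_nonneg (M.p0_nonneg _) (M.g0_nonneg _ _)) ?_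
  exact Finset.prod_nonneg fun t _ => mul_nonneg
    (mul_nonneg (M.pol_nonneg _ _ _ _) (M.f_nonneg _ _ _ _)) (M.g_nonneg _ _ _ _)

lemma prob_nonneg {α : Type*} [DecidableEq α] (A : Traj T X Y U → α) (a : α) :
    0 ≤ M.prob A a :=
  Finset.sum_nonneg fun ω _ => by
    split
    · exact p_nonneg M ω
    · exact le_refl 0

lemma prob_congr {α β : Type*} [DecidableEq α] [DecidableEq β]
    (A : Traj T X Y U → α) (B : Traj T X Y U → β) (a : α) (b : β)
    (h : ∀ ω, A ω = a ↔ B ω = b) : M.prob A a = M.prob B b := by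
  unfold CHMM.prob
  refine Finset.sum_congr rfl fun ω _ => ?_
  by_cases hω : A ω = a
  · rw [if_pos hω, if_pos ((h ω).1 hω)]
  · rw [if_neg hω, if_neg (fun hb => hω ((h ω).2 hb))]

lemma prob_marg {α β : Type*} [Fintype β] [DecidableEq α] [DecidableEq β]
    (A : Traj T X Y U → α) (B : Traj T X Y U → β) (a : α) :
    M.prob A a = ∑ b, M.prob (fun ω => (A ω, B ω)) (a, b) := by
  unfold CHMM.prob
  rw [Finset.sum_comm]
  refine Finset.sum_congr rfl fun ω _ => ?_
  by_cases hω : A ω = a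
  · simp [Prod.ext_iff, hω]
  · simp [Prod.ext_iff, hω]

/-- Chain rule for conditional entropy: `H(A,B|C) = H(A|C) + H(B|A,C)`. -/
lemma condEnt_chain {α β γ : Type*}
    [Fintype α] [DecidableEq α] [Fintype β] [DecidableEq β] [Fintype γ] [DecidableEq γ]
    (A : Traj T X Y U → α) (B : Traj T X Y U → β) (C : Traj T X Y U → γ) :
    M.condEnt (fun ω => (A ω, B ω)) C
      = M.condEnt A C + M.condEnt B (fun ω => (A ω, C ω)) := by
  unfold CHMM.condEnt
  set P3 : α → β → γ → ℝ := fun a b c =>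
    M.prob (fun ω => ((A ω, B ω), C ω)) ((a, b), c) with hP3
  have h3nn : ∀ a b c, 0 ≤ P3 a b c := fun a b c => prob_nonneg M _ _
  have hPac : ∀ a c, M.prob (fun ω => (A ω, C ω)) (a, c) = ∑ b, P3 a b c := by
    intro a c
    rw [prob_marg M (fun ω => (A ω, C ω)) B (a, c)]
    exact Finset.sum_congr rfl fun b _ =>
      prob_congr M _ _ _ _ (fun ω => by simp [Prod.ext_iff]; tauto)
  have hPb : ∀ a b c,
      M.prob (fun ω => (B ω, (A ω, C ω))) (b, (a, c)) = P3 a b c := by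
    intro a b c
    exact prob_congr M _ _ _ _ (fun ω => by simp [Prod.ext_iff]; tauto)
  have hPc : ∀ c, ∀ a, (∑ b, P3 a b c) ≤ M.prob C c := by
    intro c a
    rw [prob_marg M C (fun ω => (A ω, B ω)) c]
    rw [show (∑ p : α × β, M.prob (fun ω => (C ω, (A ω, B ω))) (c, p))
        = ∑ a' : α, ∑ b : β, P3 a' b c from ?_]
    · exact Finset.single_le_sum
        (fun a' _ => Finset.sum_nonneg fun b _ => h3nn a' b c) (Finset.mem_univ a)
    · rw [Fintype.sum_prod_type]
      exact Finset.sum_congr rfl fun a' _ => Finset.sum_congr rfl fun b _ =>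
        prob_congr M _ _ _ _ (fun ω => by simp [Prod.ext_iff]; tauto)
  have key : ∀ a b c,
      P3 a b c * Real.log (P3 a b c / M.prob C c)
        = P3 a b c * Real.log ((∑ b', P3 a b' c) / M.prob C c)
          + P3 a b c * Real.log (P3 a b c / (∑ b', P3 a b' c)) := by
    intro a b c
    by_cases h0 : P3 a b c = 0
    · simp [h0]
    have hpos : 0 < P3 a b c := lt_of_le_of_ne (h3nn a b c) (Ne.symm h0)
    have hac : 0 < ∑ b', P3 a b' c :=
      lt_of_lt_of_le hpos
        (Finset.single_le_sum (fun b' _ => h3nn a b' c) (Finset.mem_univ b))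
    have hc : 0 < M.prob C c := lt_of_lt_of_le hac (hPc c a)
    have harg : P3 a b c / M.prob C c
        = ((∑ b', P3 a b' c) / M.prob C c) * (P3 a b c / (∑ b', P3 a b' c)) := by
      field_simp
    rw [harg, Real.log_mul (div_pos hac hc).ne' (div_pos hpos hac).ne', mul_add]
  -- rewrite the three sums
  rw [Fintype.sum_prod_type]
  have L1 : ∀ (a : α) (b : β) (c : γ),
      M.prob (fun ω => ((A ω, B ω), C ω)) ((a, b), c) = P3 a b c := fun _ _ _ => rfl
  calc
    -∑ a, ∑ b, ∑ c, P3 a b c * Real.log (P3 a b c / M.prob C c)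
        = -∑ a, ∑ b, ∑ c, (P3 a b c * Real.log ((∑ b', P3 a b' c) / M.prob C c)
            + P3 a b c * Real.log (P3 a b c / (∑ b', P3 a b' c))) := by
          congr 1
          exact Finset.sum_congr rfl fun a _ => Finset.sum_congr rfl fun b _ =>
            Finset.sum_congr rfl fun c _ => key a b c
    _ = -(∑ a, ∑ b, ∑ c, P3 a b c * Real.log ((∑ b', P3 a b' c) / M.prob C c))
          + -(∑ a, ∑ b, ∑ c, P3 a b c * Real.log (P3 a b c / (∑ b', P3 a b' c))) := by
          simp [Finset.sum_add_distrib]; ring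
    _ = _ := by
          congr 1
          · congr 1
            refine Finset.sum_congr rfl fun a _ => ?_
            rw [Finset.sum_comm]
            refine Finset.sum_congr rfl fun c _ => ?_
            rw [← Finset.sum_mul, hPac a c]
          · rw [Finset.sum_comm]
            refine congrArg Neg.neg (Finset.sum_congr rfl fun b _ => ?_)
            beta_reduce
            rw [Fintype.sum_prod_type]
            refine Finset.sum_congr rfl fun a _ => Finset.sum_congr rfl fun c _ => ?_
            rw [hPb, hPac]

lemma condEnt_comm {α β γ : Type*}
    [Fintype α] [DecidableEq α] [Fintype β] [DecidableEq β] [Fintype γ] [DecidableEq γ]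
    (A : Traj T X Y U → α) (B : Traj T X Y U → β) (C : Traj T X Y U → γ) :
    M.condEnt (fun ω => (A ω, B ω)) C = M.condEnt (fun ω => (B ω, A ω)) C := by
  unfold CHMM.condEnt
  rw [Fintype.sum_prod_type, Fintype.sum_prod_type, Finset.sum_comm]
  refine congrArg Neg.neg (Finset.sum_congr rfl fun b _ =>
    Finset.sum_congr rfl fun a _ => Finset.sum_congr rfl fun c _ => ?_)
  rw [show M.prob (fun ω => ((A ω, B ω), C ω)) ((a, b), c)
      = M.prob (fun ω => ((B ω, A ω), C ω)) ((b, a), c) from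
    prob_congr M _ _ _ _ (fun ω => by simp [Prod.ext_iff]; tauto)]

/-- Symmetry of conditional mutual information. -/
lemma condMI_symm {α β γ : Type*}
    [Fintype α] [DecidableEq α] [Fintype β] [DecidableEq β] [Fintype γ] [DecidableEq γ]
    (A : Traj T X Y U → α) (B : Traj T X Y U → β) (C : Traj T X Y U → γ) :
    M.condEnt A C - M.condEnt A (fun ω => (B ω, C ω))
      = M.condEnt B C - M.condEnt B (fun ω => (A ω, C ω)) := by
  have h1 := condEnt_chain M A B C
  have h2 := condEnt_chain M B A C
  have h3 := condEnt_comm M A B C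
  linarith

end CHMMAux
namespace CHMMAux

variable {T : ℕ} {X Y U : Type*} [Fintype X] [Fintype Y] [Fintype U]
  [DecidableEq X] [DecidableEq Y] [DecidableEq U] (M : CHMM T X Y U)

lemma p_update_mul (hT : 1 ≤ T) (xs : Fin (T + 1) → X) (ys : Fin (T + 1) → Y)
    (us : Fin T → U) (y' : Y) :
    M.p (xs, ys, us) * M.g ⟨T - 1, by omega⟩ y' (xs (Fin.last T)) (us ⟨T - 1, by omega⟩)
      = M.p (xs, Function.update ys (Fin.last T) y', us)
        * M.g ⟨T - 1, by omega⟩ (ys (Fin.last T)) (xs (Fin.last T)) (us ⟨T - 1, by omega⟩) := by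
  set tL : Fin T := ⟨T - 1, by omega⟩ with htL
  have hsucc : tL.succ = Fin.last T := by
    ext; simp [htL, Fin.last]; omega
  set ys' := Function.update ys (Fin.last T) y' with hys'
  have hne : ∀ i : Fin (T + 1), (i : ℕ) < T → ys' i = ys i := by
    intro i hi
    apply Function.update_of_ne
    intro h
    rw [h] at hi
    simp [Fin.last] at hi
  have h0 : ys' 0 = ys 0 := hne 0 (by simp only [Fin.val_zero]; omega)
  have hlast : ys' (Fin.last T) = y' := Function.update_self _ _ _
  have hpol : ∀ t : Fin T, M.pol t (us t) ys' us = M.pol t (us t) ys us := by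
    intro t
    exact M.pol_causal t (us t) ys' ys us us
      (fun i hi => hne i (lt_of_le_of_lt hi t.isLt)) (fun _ _ => rfl)
  have hprod : ∀ zs : Fin (T + 1) → Y,
      (∏ t : Fin T, (M.pol t (us t) zs us * M.f t (xs t.succ) (xs t.castSucc) (us t) *
          M.g t (zs t.succ) (xs t.succ) (us t)))
      = (M.pol tL (us tL) zs us * M.f tL (xs tL.succ) (xs tL.castSucc) (us tL) *
          M.g tL (zs (Fin.last T)) (xs (Fin.last T)) (us tL)) *
        ∏ t ∈ Finset.univ.erase tL,
          (M.pol t (us t) zs us * M.f t (xs t.succ) (xs t.castSucc) (us t) *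
            M.g t (zs t.succ) (xs t.succ) (us t)) := by
    intro zs
    rw [← Finset.mul_prod_erase Finset.univ _ (Finset.mem_univ tL), hsucc]
  have herase :
      (∏ t ∈ Finset.univ.erase tL,
          (M.pol t (us t) ys' us * M.f t (xs t.succ) (xs t.castSucc) (us t) *
            M.g t (ys' t.succ) (xs t.succ) (us t)))
      = ∏ t ∈ Finset.univ.erase tL,
          (M.pol t (us t) ys us * M.f t (xs t.succ) (xs t.castSucc) (us t) *
            M.g t (ys t.succ) (xs t.succ) (us t)) := by
    refine Finset.prod_congr rfl fun t ht => ?_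
    have htne : t ≠ tL := (Finset.mem_erase.mp ht).1
    have hlt : (t : ℕ) + 1 < T := by
      have h1 : (t : ℕ) < T := t.isLt
      have h2 : (t : ℕ) ≠ T - 1 := fun h => htne (by ext; simp [htL, h])
      omega
    rw [hpol t, hne t.succ (by simpa using hlt)]
  show M.p0 (xs 0) * M.g0 (ys 0) (xs 0) * _ * _ = M.p0 (xs 0) * M.g0 (ys' 0) (xs 0) * _ * _
  rw [hprod ys, hprod ys', herase, h0, hlast, hpol tL]
  ring

lemma p_split (hT : 1 ≤ T) (xs : Fin (T + 1) → X) (ys : Fin (T + 1) → Y) (us : Fin T → U) :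
    M.p (xs, ys, us)
      = (∑ y', M.p (xs, Function.update ys (Fin.last T) y', us))
        * M.g ⟨T - 1, by omega⟩ (ys (Fin.last T)) (xs (Fin.last T)) (us ⟨T - 1, by omega⟩) := by
  rw [Finset.sum_mul]
  have h : ∀ y' : Y,
      M.p (xs, Function.update ys (Fin.last T) y', us)
        * M.g ⟨T - 1, by omega⟩ (ys (Fin.last T)) (xs (Fin.last T)) (us ⟨T - 1, by omega⟩)
      = M.p (xs, ys, us) * M.g ⟨T - 1, by omega⟩ y' (xs (Fin.last T)) (us ⟨T - 1, by omega⟩) :=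
    fun y' => (p_update_mul M hT xs ys us y').symm
  rw [Finset.sum_congr rfl fun y' _ => h y', ← Finset.mul_sum, M.g_sum, mul_one]

end CHMMAux

namespace CHMMAux2
open CHMMAux

variable {T : ℕ} {X Y U : Type*} [Fintype X] [Fintype Y] [Fintype U]
  [DecidableEq X] [DecidableEq Y] [DecidableEq U] (M : CHMM T X Y U)

lemma prob_point {α : Type*} [DecidableEq α] (A : Traj T X Y U → α) (a : α)
    (ω₀ : Traj T X Y U) (h : ∀ ω, A ω = a ↔ ω = ω₀) : M.prob A a = M.p ω₀ := by
  unfold CHMM.prob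
  have he : (∑ ω : Traj T X Y U, if A ω = a then M.p ω else 0)
      = ∑ ω : Traj T X Y U, if ω = ω₀ then M.p ω else 0 :=
    Finset.sum_congr rfl fun ω _ => by
      by_cases hω : A ω = a
      · rw [if_pos hω, if_pos ((h ω).1 hω)]
      · rw [if_neg hω, if_neg fun he => hω ((h ω).2 he)]
  rw [he]
  simp

lemma snoc_char {V : Type*} (vs : Fin (T + 1) → V) (a : Fin T → V) (x : V) :
    ((fun i : Fin T => vs (Fin.castLE (Nat.le_succ T) i)) = a ∧ vs (Fin.last T) = x)
      ↔ vs = Fin.snoc a x := by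
  constructor
  · rintro ⟨h1, h2⟩
    funext i
    refine Fin.lastCases ?_ (fun j => ?_) i
    · rw [Fin.snoc_last]; exact h2
    · rw [Fin.snoc_castSucc]
      exact congrFun h1 j
  · rintro rfl
    refine ⟨funext fun j => ?_, Fin.snoc_last _ _⟩
    exact Fin.snoc_castSucc _ _ _

lemma upd_snoc {V : Type*} (y : Fin T → V) (yT y' : V) :
    Function.update (Fin.snoc y yT : Fin (T+1) → V) (Fin.last T) y' = Fin.snoc y y' := by
  funext i
  refine Fin.lastCases ?_ (fun j => ?_) i
  · rw [Function.update_self, Fin.snoc_last]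
  · rw [Function.update_of_ne (Fin.castSucc_lt_last j).ne, Fin.snoc_castSucc, Fin.snoc_castSucc]

end CHMMAux2
set_option synthInstance.maxHeartbeats 1000000
namespace CHMMAux2
open CHMMAux

variable {T : ℕ} {X Y U : Type*} [Fintype X] [Fintype Y] [Fintype U]
  [DecidableEq X] [DecidableEq Y] [DecidableEq U]

lemma condEnt_dropY (hT : 1 ≤ T) (M : CHMM T X Y U) :
    M.condEnt (Xpref T T (Nat.le_succ T))
        (fun ω : Traj T X Y U => (Xat T T (Nat.lt_succ_self T) ω,
          Ypref T (T + 1) le_rfl ω, Upref T T le_rfl ω))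
      = M.condEnt (Xpref T T (Nat.le_succ T))
        (fun ω : Traj T X Y U => (Xat T T (Nat.lt_succ_self T) ω,
          Ypref T T (Nat.le_succ T) ω, Upref T T le_rfl ω)) := by
  set tL : Fin T := ⟨T - 1, by omega⟩ with htL
  set Jp : (Fin T → X) → X → (Fin (T + 1) → Y) → (Fin T → U) → ℝ :=
    fun a x yf u => M.p (Fin.snoc a x, yf, u) with hJ
  set K : (Fin T → X) → X → (Fin T → Y) → (Fin T → U) → ℝ :=
    fun a x y u => ∑ yT, Jp a x (Fin.snoc y yT) u with hK
  -- joint with full measurement history is a point mass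
  have hfull : ∀ (a : Fin T → X) (b : X × (Fin (T + 1) → Y) × (Fin T → U)),
      M.prob (fun ω : Traj T X Y U => (Xpref T T (Nat.le_succ T) ω,
          (Xat T T (Nat.lt_succ_self T) ω, Ypref T (T + 1) le_rfl ω, Upref T T le_rfl ω)))
        (a, b) = Jp a b.1 b.2.1 b.2.2 := by
    rintro a ⟨x, yf, u⟩
    refine prob_point M _ _ (Fin.snoc a x, yf, u) ?_
    rintro ⟨xs, ys, us⟩
    simp only [Xpref, Xat, Ypref, Upref, Prod.mk.injEq]
    constructor
    · rintro ⟨h1, h2, h3, h4⟩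
      exact ⟨(snoc_char xs a x).1 ⟨h1, h2⟩, h3, h4⟩
    · rintro ⟨h1, h2, h3⟩
      have hx := (snoc_char xs a x).2 h1
      exact ⟨hx.1, hx.2, h2, h3⟩
  have hQfull : ∀ b : X × (Fin (T + 1) → Y) × (Fin T → U),
      M.prob (fun ω : Traj T X Y U => (Xat T T (Nat.lt_succ_self T) ω,
          Ypref T (T + 1) le_rfl ω, Upref T T le_rfl ω)) b
        = ∑ a, Jp a b.1 b.2.1 b.2.2 := by
    intro b
    rw [prob_marg M _ (Xpref T T (Nat.le_succ T)) b]
    refine Finset.sum_congr rfl fun a _ => ?_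
    rw [← hfull a b]
    exact prob_congr M _ _ _ _ fun ω => by
      simp only [Prod.mk.injEq]; tauto
  -- joint with measurement history up to T-1
  have hPT : ∀ (a : Fin T → X) (b : X × (Fin T → Y) × (Fin T → U)),
      M.prob (fun ω : Traj T X Y U => (Xpref T T (Nat.le_succ T) ω,
          (Xat T T (Nat.lt_succ_self T) ω, Ypref T T (Nat.le_succ T) ω, Upref T T le_rfl ω)))
        (a, b) = K a b.1 b.2.1 b.2.2 := by
    rintro a ⟨x, y, u⟩
    letI : DecidableEq (((Fin T → X) × X × (Fin T → Y) × (Fin T → U)) × Y) :=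
      instDecidableEqProd
    rw [prob_marg M _ (Yat T T (Nat.lt_succ_self T)) (a, (x, y, u))]
    refine Finset.sum_congr rfl fun yT _ => ?_
    refine prob_point M _ _ (Fin.snoc a x, Fin.snoc y yT, u) ?_
    rintro ⟨xs, ys, us⟩
    simp only [Xpref, Xat, Ypref, Yat, Upref, Prod.mk.injEq]
    constructor
    · rintro ⟨⟨h1, h2, h3, h4⟩, h5⟩
      exact ⟨(snoc_char xs a x).1 ⟨h1, h2⟩, (snoc_char ys y yT).1 ⟨h3, h5⟩, h4⟩
    · rintro ⟨h1, h2, h3⟩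
      have hx := (snoc_char xs a x).2 h1
      have hy := (snoc_char ys y yT).2 h2
      exact ⟨⟨hx.1, hx.2, hy.1, h3⟩, hy.2⟩
  have hQT : ∀ b : X × (Fin T → Y) × (Fin T → U),
      M.prob (fun ω : Traj T X Y U => (Xat T T (Nat.lt_succ_self T) ω,
          Ypref T T (Nat.le_succ T) ω, Upref T T le_rfl ω)) b
        = ∑ a, K a b.1 b.2.1 b.2.2 := by
    intro b
    rw [prob_marg M _ (Xpref T T (Nat.le_succ T)) b]
    refine Finset.sum_congr rfl fun a _ => ?_
    rw [← hPT a b]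
    exact prob_congr M _ _ _ _ fun ω => by
      simp only [Prod.mk.injEq]; tauto
  -- the factorization of the last measurement
  have hsplit : ∀ (a : Fin T → X) (x : X) (y : Fin T → Y) (yT : Y) (u : Fin T → U),
      Jp a x (Fin.snoc y yT) u = K a x y u * M.g tL yT x (u tL) := by
    intro a x y yT u
    have h := p_split M hT (Fin.snoc a x) (Fin.snoc y yT) u
    simp only [upd_snoc, Fin.snoc_last] at h
    exact h
  -- main computation
  unfold CHMM.condEnt
  simp only [hfull, hQfull, hPT, hQT, Fintype.sum_prod_type]
  refine congrArg Neg.neg (Finset.sum_congr rfl fun a _ =>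
    Finset.sum_congr rfl fun x _ => ?_)
  rw [show (∑ yf : Fin (T + 1) → Y, ∑ u : Fin T → U,
        Jp a x yf u * Real.log (Jp a x yf u / ∑ a', Jp a' x yf u))
      = ∑ q : Y × (Fin T → Y), ∑ u : Fin T → U,
        Jp a x (Fin.snoc q.2 q.1) u *
          Real.log (Jp a x (Fin.snoc q.2 q.1) u / ∑ a', Jp a' x (Fin.snoc q.2 q.1) u) from
    (Fintype.sum_equiv (Fin.snocEquiv fun _ => Y) _ _ fun q => rfl).symm]
  rw [Fintype.sum_prod_type]
  conv_lhs => rw [Finset.sum_comm]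
  refine Finset.sum_congr rfl fun y _ => ?_
  conv_lhs => rw [Finset.sum_comm]
  refine Finset.sum_congr rfl fun u _ => ?_
  calc (∑ yT : Y, Jp a x (Fin.snoc y yT) u *
          Real.log (Jp a x (Fin.snoc y yT) u / ∑ a', Jp a' x (Fin.snoc y yT) u))
      = ∑ yT : Y, (K a x y u * Real.log (K a x y u / ∑ a', K a' x y u))
          * M.g tL yT x (u tL) := by
        refine Finset.sum_congr rfl fun yT _ => ?_
        have hsum : (∑ a', Jp a' x (Fin.snoc y yT) u)
            = (∑ a', K a' x y u) * M.g tL yT x (u tL) := by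
          rw [Finset.sum_mul]
          exact Finset.sum_congr rfl fun a' _ => hsplit a' x y yT u
        rw [hsplit a x y yT u, hsum]
        by_cases hG : M.g tL yT x (u tL) = 0
        · simp [hG]
        · rw [mul_div_mul_right _ _ hG]
          ring
    _ = K a x y u * Real.log (K a x y u / ∑ a', K a' x y u) := by
        rw [← Finset.mul_sum, M.g_sum tL x (u tL), mul_one]

end CHMMAux2
/-- The exchange identity
`H(X_T | Y^{T-1}, U^{T-1}) − H(X_T | X^{T-1}, Y^{T-1}, U^{T-1})
  = H(X^{T-1} | Y^{T-1}, U^{T-1}) − H(X^{T-1} | X_T, Y^T, U^{T-1})`. -/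
theorem smoother_entropy_exchange_identity
    {T : ℕ} {X Y U : Type*} [Fintype X] [Fintype Y] [Fintype U]
    [DecidableEq X] [DecidableEq Y] [DecidableEq U]
    (hT : 1 ≤ T) (M : CHMM T X Y U) :
    M.condEnt (Xat T T (by omega))
        (fun ω => (Ypref T T (by omega) ω, Upref T T le_rfl ω))
      - M.condEnt (Xat T T (by omega))
        (fun ω => (Xpref T T (by omega) ω, Ypref T T (by omega) ω, Upref T T le_rfl ω))
    = M.condEnt (Xpref T T (by omega))
        (fun ω => (Ypref T T (by omega) ω, Upref T T le_rfl ω))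
      - M.condEnt (Xpref T T (by omega))
        (fun ω => (Xat T T (by omega) ω, Ypref T (T + 1) le_rfl ω, Upref T T le_rfl ω)) := by
  have h1 := CHMMAux.condMI_symm M (Xat T T (Nat.lt_succ_self T)) (Xpref T T (Nat.le_succ T))
      (fun ω : Traj T X Y U => (Ypref T T (Nat.le_succ T) ω, Upref T T le_rfl ω))
  have h2 := CHMMAux2.condEnt_dropY hT M
  have h2' : M.condEnt (Xpref T T (by omega : T ≤ T + 1))
        (fun ω : Traj T X Y U => (Xat T T (by omega : T < T + 1) ω,
          Ypref T (T + 1) le_rfl ω, Upref T T le_rfl ω))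
      = M.condEnt (Xpref T T (by omega : T ≤ T + 1))
        (fun ω : Traj T X Y U => (Xat T T (by omega : T < T + 1) ω,
          Ypref T T (by omega : T ≤ T + 1) ω, Upref T T le_rfl ω)) := h2
  rw [h2']
  exact h1
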